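/- Let λ₁, λ₂ > 0 with λ₁ ≠ λ₂, and for Δ > 0 set p₁(Δ) = e^{−λ₁Δ}, p₂(Δ) = e^{−λ₂Δ}, and C(Δ) = (1 − p₂(Δ)²)p₁(Δ) / [ (1 − p₂(Δ)²)p₁(Δ) − (1 − p₁(Δ)²)p₂(Δ) ]. Then as Δ → 0⁺, C(Δ) → λ₂/(λ₂−λ₁), and moreover (C(Δ) − λ₂/(λ₂−λ₁))/Δ² → (1/6)·λ₁λ₂(λ₁+λ₂)/(λ₁−λ₂). -/

import Mathlib

open Filter Real

lemma exp_taylor3 (μ : ℝ) :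
    Tendsto (fun x : ℝ => (Real.exp (μ*x) - (1 + μ*x + μ^2*x^2/2 + μ^3*x^3/6)) / x^3)
      (nhdsWithin 0 (Set.Ioi 0)) (nhds 0) := by
  have hδ : (0:ℝ) < (|μ|+1)⁻¹ := by positivity
  apply squeeze_zero_norm' (a := fun x => |μ|^4 * x * (5/96))
  · filter_upwards [Ioo_mem_nhdsGT_of_mem (Set.mem_Ico.2 ⟨le_refl 0, hδ⟩)] with x hx
    obtain ⟨hx0, hx1⟩ := hx
    have hμx : |μ * x| ≤ 1 := by
      rw [abs_mul, abs_of_pos hx0]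
      calc |μ| * x ≤ (|μ|+1) * (|μ|+1)⁻¹ := by
            apply mul_le_mul (by linarith [abs_nonneg μ]) hx1.le hx0.le (by positivity)
        _ = 1 := mul_inv_cancel₀ (by positivity)
    have hb := Real.exp_bound hμx (n := 4) (by norm_num)
    have hsum : ∑ m ∈ Finset.range 4, (μ*x) ^ m / m.factorial
        = 1 + μ*x + μ^2*x^2/2 + μ^3*x^3/6 := by
      simp [Finset.sum_range_succ, Nat.factorial]
      ring
    rw [hsum] at hb
    have hb' : |Real.exp (μ*x) - (1 + μ*x + μ^2*x^2/2 + μ^3*x^3/6)|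
        ≤ |μ|^4 * x^4 * (5/96) := by
      calc _ ≤ |μ * x| ^ 4 * ((4:ℕ).succ / ((4:ℕ).factorial * 4)) := hb
        _ = |μ|^4 * x^4 * (5/96) := by
            rw [abs_mul, abs_of_pos hx0, mul_pow]
            norm_num [Nat.factorial]
    calc ‖(Real.exp (μ*x) - (1 + μ*x + μ^2*x^2/2 + μ^3*x^3/6)) / x^3‖
        = |Real.exp (μ*x) - (1 + μ*x + μ^2*x^2/2 + μ^3*x^3/6)| / x^3 := by
          rw [norm_div, Real.norm_eq_abs, Real.norm_eq_abs, abs_of_pos (pow_pos hx0 3)]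
      _ ≤ (|μ|^4 * x^4 * (5/96)) / x^3 :=
          div_le_div_of_nonneg_right hb' (by positivity) |>.trans_eq rfl
      _ = |μ|^4 * x * (5/96) := by field_simp
  · have : Tendsto (fun x : ℝ => |μ|^4 * x * (5/96)) (nhdsWithin 0 (Set.Ioi 0))
        (nhds (|μ|^4 * 0 * (5/96))) := by
      apply Tendsto.mono_left _ nhdsWithin_le_nhds
      exact (tendsto_id.const_mul _).mul_const _
    simpa using this

set_option maxHeartbeats 1600000 in
theorem ar2_exp_mixing_coefficient_limit (l₁ l₂ : ℝ) (h₁ : 0 < l₁) (h₂ : 0 < l₂)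
    (hne : l₁ ≠ l₂)
    (C : ℝ → ℝ)
    (hC : ∀ Δ, C Δ = (1 - Real.exp (-l₂ * Δ) ^ 2) * Real.exp (-l₁ * Δ)
      / ((1 - Real.exp (-l₂ * Δ) ^ 2) * Real.exp (-l₁ * Δ)
        - (1 - Real.exp (-l₁ * Δ) ^ 2) * Real.exp (-l₂ * Δ))) :
    Tendsto C (nhdsWithin 0 (Set.Ioi 0)) (nhds (l₂ / (l₂ - l₁))) ∧
    Tendsto (fun Δ => (C Δ - l₂ / (l₂ - l₁)) / Δ ^ 2) (nhdsWithin 0 (Set.Ioi 0))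
      (nhds ((1 / 6) * l₁ * l₂ * (l₁ + l₂) / (l₁ - l₂))) := by
  have hsub : l₂ - l₁ ≠ 0 := sub_ne_zero.2 (Ne.symm hne)
  have hsub' : l₁ - l₂ ≠ 0 := sub_ne_zero.2 hne
  set F₃ : ℝ := l₁*l₂*(l₁^2-l₂^2)/3 with hF₃
  -- numerator limit
  have h1 := exp_taylor3 (-l₁)
  have h2 := exp_taylor3 (-(l₁+2*l₂))
  have h3 := exp_taylor3 (-l₂)
  have h4 := exp_taylor3 (-(2*l₁+l₂))
  have hf : Tendsto (fun x : ℝ =>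
      (-l₁ * Real.exp (-l₁*x) + l₁ * Real.exp (-(l₁+2*l₂)*x)
        + l₂ * Real.exp (-l₂*x) - l₂ * Real.exp (-(2*l₁+l₂)*x)) / x^3)
      (nhdsWithin 0 (Set.Ioi 0)) (nhds F₃) := by
    have hcomb := ((((h1.const_mul (-l₁)).add (h2.const_mul l₁)).add
      (h3.const_mul l₂)).add (h4.const_mul (-l₂))).add_const F₃
    simp only [mul_zero, add_zero, zero_add] at hcomb
    apply hcomb.congr'
    filter_upwards [self_mem_nhdsWithin] with x (hx : 0 < x)
    have hx3 : x^3 ≠ 0 := by positivity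
    field_simp
    ring
  -- (a - b)/x limit
  have hg : Tendsto (fun x : ℝ => (Real.exp (-l₁*x) - Real.exp (-l₂*x)) / x)
      (nhdsWithin 0 (Set.Ioi 0)) (nhds (l₂ - l₁)) := by
    have d1 : HasDerivAt (fun x : ℝ => Real.exp (-l₁*x)) (-l₁) 0 := by
      simpa using ((hasDerivAt_id (0:ℝ)).const_mul (-l₁)).exp
    have d2 : HasDerivAt (fun x : ℝ => Real.exp (-l₂*x)) (-l₂) 0 := by
      simpa using ((hasDerivAt_id (0:ℝ)).const_mul (-l₂)).exp
    have hd : HasDerivAt (fun x : ℝ => Real.exp (-l₁*x) - Real.exp (-l₂*x)) (l₂ - l₁) 0 := by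
      exact (d1.sub d2).congr_deriv (by ring)
    have := hasDerivAt_iff_tendsto_slope.1 hd
    have hmono : Tendsto (slope (fun x : ℝ => Real.exp (-l₁*x) - Real.exp (-l₂*x)) 0)
        (nhdsWithin 0 (Set.Ioi 0)) (nhds (l₂ - l₁)) :=
      this.mono_left (nhdsWithin_mono 0 (fun x hx => ne_of_gt hx))
    apply hmono.congr'
    filter_upwards [self_mem_nhdsWithin] with x (hx : 0 < x)
    simp [slope_def_field]
  -- 1 + ab limit
  have hh : Tendsto (fun x : ℝ => 1 + Real.exp (-l₁*x) * Real.exp (-l₂*x))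
      (nhdsWithin 0 (Set.Ioi 0)) (nhds 2) := by
    have hcont : Continuous (fun x : ℝ => 1 + Real.exp (-l₁*x) * Real.exp (-l₂*x)) := by
      continuity
    have := (hcont.tendsto 0).mono_left
      (nhdsWithin_le_nhds (s := Set.Ioi (0:ℝ)))
    norm_num at this
    simpa [neg_mul] using this
  -- combined limit
  have hden : (l₂ - l₁) * 2 * (l₂ - l₁) ≠ 0 := by
    simp [hsub]
  have hq : Tendsto (fun x : ℝ =>
      ((-l₁ * Real.exp (-l₁*x) + l₁ * Real.exp (-(l₁+2*l₂)*x)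
        + l₂ * Real.exp (-l₂*x) - l₂ * Real.exp (-(2*l₁+l₂)*x)) / x^3)
      / (((Real.exp (-l₁*x) - Real.exp (-l₂*x)) / x)
          * (1 + Real.exp (-l₁*x) * Real.exp (-l₂*x)) * (l₂ - l₁)))
      (nhdsWithin 0 (Set.Ioi 0)) (nhds (F₃ / ((l₂ - l₁) * 2 * (l₂ - l₁)))) :=
    hf.div ((hg.mul hh).mul_const (l₂ - l₁)) hden
  -- target value
  have hval : F₃ / ((l₂ - l₁) * 2 * (l₂ - l₁)) = (1/6) * l₁ * l₂ * (l₁+l₂) / (l₁-l₂) := by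
    rw [hF₃]
    field_simp
    ring
  -- eventual equality
  have heq : ∀ᶠ x in nhdsWithin 0 (Set.Ioi 0),
      ((-l₁ * Real.exp (-l₁*x) + l₁ * Real.exp (-(l₁+2*l₂)*x)
        + l₂ * Real.exp (-l₂*x) - l₂ * Real.exp (-(2*l₁+l₂)*x)) / x^3)
      / (((Real.exp (-l₁*x) - Real.exp (-l₂*x)) / x)
          * (1 + Real.exp (-l₁*x) * Real.exp (-l₂*x)) * (l₂ - l₁))
      = (C x - l₂ / (l₂ - l₁)) / x ^ 2 := by
    filter_upwards [self_mem_nhdsWithin] with x (hx : 0 < x)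
    have hxne : x ≠ 0 := hx.ne'
    set a := Real.exp (-l₁*x) with ha
    set b := Real.exp (-l₂*x) with hb
    have ha0 : 0 < a := Real.exp_pos _
    have hb0 : 0 < b := Real.exp_pos _
    have hab : a - b ≠ 0 := by
      rw [sub_ne_zero]
      intro h
      apply hne
      have h' : -l₁ * x = -l₂ * x := Real.exp_injective h
      have := mul_right_cancel₀ hxne h'
      linarith
    have h1ab : (1:ℝ) + a * b ≠ 0 := by positivity
    have hfact : (1 - b^2)*a - (1 - a^2)*b = (a-b)*(1+a*b) := by ring
    have hD : (1 - b^2)*a - (1 - a^2)*b ≠ 0 := by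
      rw [hfact]; exact mul_ne_zero hab h1ab
    have e1 : Real.exp (-(l₁+2*l₂)*x) = a*b*b := by
      rw [ha, hb, ← Real.exp_add, ← Real.exp_add]; ring_nf
    have e2 : Real.exp (-(2*l₁+l₂)*x) = a*a*b := by
      rw [ha, hb, ← Real.exp_add, ← Real.exp_add]; ring_nf
    rw [hC x, e1, e2, ← ha, ← hb, hfact]
    field_simp [hD]
    ring
  have part2 : Tendsto (fun Δ => (C Δ - l₂ / (l₂ - l₁)) / Δ ^ 2) (nhdsWithin 0 (Set.Ioi 0))
      (nhds ((1 / 6) * l₁ * l₂ * (l₁ + l₂) / (l₁ - l₂))) := by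
    rw [← hval]
    exact hq.congr' heq
  refine ⟨?_, part2⟩
  have hx2 : Tendsto (fun x : ℝ => x^2) (nhdsWithin 0 (Set.Ioi 0)) (nhds 0) := by
    have := ((continuous_pow 2).tendsto (0:ℝ)).mono_left
      (nhdsWithin_le_nhds (s := Set.Ioi (0:ℝ)))
    simpa using this
  have hfin := (part2.mul hx2).add_const (l₂ / (l₂ - l₁))
  simp only [mul_zero, zero_add] at hfin
  apply hfin.congr'
  filter_upwards [self_mem_nhdsWithin] with x (hx : 0 < x)
  have hx2ne : x^2 ≠ 0 := by positivity
  field_simp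
  ring
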